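/- Let N ≥ 1 and k ≥ 1, let ρ_z be a density matrix on ℂ^k for each z ∈ Fin N, and let g : Fin N → Fin N be a function. Define X = (1/N)·Σ_z ρ_z ⊗ₖ E_{g(z)} and Y = (1/N)·Σ_z ρ_z ⊗ₖ E_z, where E_w = Matrix.stdBasisMatrix w w 1. Then the trace distance satisfies ‖X − Y‖₁ ≤ 2·√(1 − p), where p = |{z ∈ Fin N : g(z) = z}| / N is the fraction of fixed points of g. -/

import Mathlib

open Matrix Kronecker
open scoped ComplexOrder BigOperators

section ZKAux
set_option linter.unusedSectionVars false
variable {n m : Type*} [Fintype n] [DecidableEq n] [Fintype m] [DecidableEq m]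

lemma conjT_kron (A : Matrix n n ℂ) (B : Matrix m m ℂ) :
    (A ⊗ₖ B)ᴴ = Aᴴ ⊗ₖ Bᴴ := by
  ext ⟨i,j⟩ ⟨i',j'⟩
  simp [conjTranspose_apply, kroneckerMap_apply]

lemma psd_kron {A : Matrix n n ℂ} {B : Matrix m m ℂ}
    (hA : A.PosSemidef) (hB : B.PosSemidef) : (A ⊗ₖ B).PosSemidef := by
  obtain ⟨C, hC⟩ : ∃ C : Matrix n n ℂ, A = Cᴴ * C := by
    open scoped MatrixOrder in exact CStarAlgebra.nonneg_iff_eq_star_mul_self.mp hA.nonneg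
  obtain ⟨D, hD⟩ : ∃ D : Matrix m m ℂ, B = Dᴴ * D := by
    open scoped MatrixOrder in exact CStarAlgebra.nonneg_iff_eq_star_mul_self.mp hB.nonneg
  rw [hC, hD, mul_kronecker_mul, ← conjT_kron]
  exact posSemidef_conjTranspose_mul_self _

lemma psd_trace_nonneg {A : Matrix n n ℂ} (hA : A.PosSemidef) : 0 ≤ A.trace := by
  refine Finset.sum_nonneg fun i _ => ?_
  have := hA.dotProduct_mulVec_nonneg (Pi.single i 1)
  simpa [dotProduct, mulVec, Pi.single_apply, Finset.sum_ite_eq] using this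

lemma psd_trace_mul_nonneg {A B : Matrix n n ℂ} (hA : A.PosSemidef) (hB : B.PosSemidef) :
    0 ≤ (A * B).trace := by
  obtain ⟨C, hC⟩ : ∃ C : Matrix n n ℂ, A = Cᴴ * C := by
    open scoped MatrixOrder in exact CStarAlgebra.nonneg_iff_eq_star_mul_self.mp hA.nonneg
  rw [hC, mul_assoc, trace_mul_comm]
  exact psd_trace_nonneg (hB.mul_mul_conjTranspose_same C)

lemma psd_smul {A : Matrix n n ℂ} (hA : A.PosSemidef) {c : ℝ} (hc : 0 ≤ c) :
    ((c : ℂ) • A).PosSemidef := by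
  refine posSemidef_iff_dotProduct_mulVec.mpr ⟨?_, ?_⟩
  · unfold Matrix.IsHermitian
    rw [conjTranspose_smul, hA.1.eq]
    simp [Complex.conj_ofReal]
  · intro x
    rw [smul_mulVec, dotProduct_smul]
    exact smul_nonneg (by exact_mod_cast hc) (hA.dotProduct_mulVec_nonneg x)

lemma psd_sum {ι : Type*} (s : Finset ι) (f : ι → Matrix n n ℂ)
    (h : ∀ i ∈ s, (f i).PosSemidef) : (∑ i ∈ s, f i).PosSemidef := by
  classical
  refine Finset.sum_induction f _ (fun a b ha hb => ha.add hb) PosSemidef.zero h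

lemma std_psd (w : m) : (Matrix.single w w (1:ℂ)).PosSemidef := by
  have : Matrix.single w w (1:ℂ) = diagonal (fun i => if i = w then 1 else 0) := by
    ext a b
    simp [Matrix.single, diagonal]
    aesop
  rw [this]
  refine PosSemidef.diagonal fun i => ?_
  dsimp; split <;> simp

lemma std_trace (w : m) : (Matrix.single w w (1:ℂ)).trace = 1 := by
  simp [Matrix.trace, Matrix.single, Matrix.diag]

lemma traceNorm_le_of_eq_sub {A P Q : Matrix n n ℂ} (hA : A.IsHermitian)
    (hP : P.PosSemidef) (hQ : Q.PosSemidef) (hPQ : A = P - Q) :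
    ∑ i, |hA.eigenvalues i| ≤ P.trace.re + Q.trace.re := by
  classical
  set U : Matrix n n ℂ := (hA.eigenvectorUnitary : Matrix n n ℂ) with hU
  have hUU : U * star U = 1 := (Matrix.mem_unitaryGroup_iff).mp (hA.eigenvectorUnitary).2
  have hUU' : star U * U = 1 := (Matrix.mem_unitaryGroup_iff').mp (hA.eigenvectorUnitary).2
  set s : n → ℝ := fun i => if 0 ≤ hA.eigenvalues i then 1 else -1 with hs
  set B : Matrix n n ℂ := U * diagonal (fun i => (s i : ℂ)) * star U with hB
  have key : ∀ t : n → ℝ, (∀ i, 0 ≤ t i) →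
      (U * diagonal (fun i => (t i : ℂ)) * star U).PosSemidef := by
    intro t ht
    have hd : Matrix.PosSemidef (diagonal (fun i => ((t i : ℂ)))) :=
      posSemidef_diagonal_iff.mpr fun i => by
        rw [Complex.zero_le_real]; exact ht i
    simpa [star_eq_conjTranspose] using hd.mul_mul_conjTranspose_same U
  have conjdiag : ∀ t : n → ℂ, (U * diagonal t * star U).trace = ∑ i, t i := by
    intro t
    rw [trace_mul_cycle, hUU', one_mul, trace_diagonal]
  -- 1 ± B psd
  have h1B : (1 - B).PosSemidef := by
    have e : 1 - B = U * diagonal (fun i => ((1 - s i : ℝ) : ℂ)) * star U := by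
      have h1 : (1 : Matrix n n ℂ) = U * 1 * star U := by rw [mul_one, hUU]
      have e2 : diagonal (fun i => ((1 - s i : ℝ) : ℂ))
          = 1 - diagonal (fun i => ((s i : ℝ) : ℂ)) := by
        rw [← diagonal_one, diagonal_sub]
        push_cast
        rfl
      rw [hB, e2, mul_sub, sub_mul, ← h1]
    rw [e]
    refine key _ fun i => by rw [hs]; dsimp only; split <;> norm_num
  have h2B : (1 + B).PosSemidef := by
    have e : 1 + B = U * diagonal (fun i => ((1 + s i : ℝ) : ℂ)) * star U := by
      have h1 : (1 : Matrix n n ℂ) = U * 1 * star U := by rw [mul_one, hUU]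
      have e2 : diagonal (fun i => ((1 + s i : ℝ) : ℂ))
          = 1 + diagonal (fun i => ((s i : ℝ) : ℂ)) := by
        rw [← diagonal_one, diagonal_add]
        push_cast
        rfl
      rw [hB, e2, mul_add, add_mul, ← h1]
    rw [e]
    refine key _ fun i => by rw [hs]; dsimp only; split <;> norm_num
  -- trace(A*B) = Σ λ_i s_i
  have hAB : (A * B).trace = ∑ i, ((hA.eigenvalues i * s i : ℝ) : ℂ) := by
    conv_lhs => rw [hA.spectral_theorem, hB, Unitary.conjStarAlgAut_apply]
    have e : ((U * diagonal (RCLike.ofReal ∘ hA.eigenvalues) * star U) *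
        (U * diagonal (fun i => (s i : ℂ)) * star U))
        = U * diagonal (fun i => ((hA.eigenvalues i * s i : ℝ) : ℂ)) * star U := by
      have : diagonal ((RCLike.ofReal ∘ hA.eigenvalues) : n → ℂ) *
          diagonal (fun i => (s i : ℂ)) = diagonal (fun i => ((hA.eigenvalues i * s i : ℝ) : ℂ)) := by
        rw [diagonal_mul_diagonal]
        congr 1
        funext i
        push_cast
        rfl
      calc (U * diagonal (RCLike.ofReal ∘ hA.eigenvalues) * star U) *
            (U * diagonal (fun i => (s i : ℂ)) * star U)
          = U * (diagonal (RCLike.ofReal ∘ hA.eigenvalues) * ((star U * U) *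
              diagonal (fun i => (s i : ℂ)))) * star U := by noncomm_ring
        _ = _ := by rw [hUU', one_mul, this]
    rw [e, conjdiag]
  -- Σ|λ| = re trace(A*B)
  have habs : ∑ i, |hA.eigenvalues i| = ((A * B).trace).re := by
    rw [hAB]
    rw [← Complex.ofReal_sum]
    rw [Complex.ofReal_re]
    refine Finset.sum_congr rfl fun i _ => ?_
    rw [hs]; dsimp only; split
    · rw [abs_of_nonneg (by assumption), mul_one]
    · rw [abs_of_neg (by linarith [lt_of_not_ge (by assumption)]), mul_neg_one]
  -- inequalities
  have hPB : ((P * B).trace).re ≤ P.trace.re := by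
    have h := psd_trace_mul_nonneg hP h1B
    have e : (P * (1 - B)).trace = P.trace - (P * B).trace := by
      rw [mul_sub, mul_one, trace_sub]
    rw [e] at h
    have := (Complex.le_def.mp h).1
    simp only [Complex.zero_re, Complex.sub_re] at this
    linarith
  have hQB : -(Q.trace.re) ≤ ((Q * B).trace).re := by
    have h := psd_trace_mul_nonneg hQ h2B
    have e : (Q * (1 + B)).trace = Q.trace + (Q * B).trace := by
      rw [mul_add, mul_one, trace_add]
    rw [e] at h
    have := (Complex.le_def.mp h).1
    simp only [Complex.zero_re, Complex.add_re] at this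
    linarith
  have hsplit : ((A * B).trace).re = ((P * B).trace).re - ((Q * B).trace).re := by
    rw [hPQ, sub_mul, trace_sub, Complex.sub_re]
  rw [habs, hsplit]
  linarith

end ZKAux

/-- Zero-knowledge simulation bound: for density matrices `ρ z` on `ℂ^k` and a guessing
function `g : Fin N → Fin N`, the trace distance between
`X = (1/N)·Σ_z ρ z ⊗ₖ |g z⟩⟨g z|` and `Y = (1/N)·Σ_z ρ z ⊗ₖ |z⟩⟨z|` is at most
`2√(1 - p)`, where `p` is the fraction of fixed points of `g`. -/
theorem traceNorm_guess_sub_ideal_le (N k : ℕ) (hN : 1 ≤ N) (hk : 1 ≤ k)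
    (ρ : Fin N → Matrix (Fin k) (Fin k) ℂ)
    (hρ : ∀ z, (ρ z).PosSemidef) (hρtr : ∀ z, (ρ z).trace = 1)
    (g : Fin N → Fin N)
    (X Y : Matrix (Fin k × Fin N) (Fin k × Fin N) ℂ)
    (hX : X = ((1 / N : ℝ) : ℂ) •
      ∑ z, (ρ z) ⊗ₖ (Matrix.single (g z) (g z) (1 : ℂ)))
    (hY : Y = ((1 / N : ℝ) : ℂ) •
      ∑ z, (ρ z) ⊗ₖ (Matrix.single z z (1 : ℂ)))
    (hH : (X - Y).IsHermitian)
    (p : ℝ) (hp : p = ((Finset.univ.filter fun z : Fin N => g z = z).card : ℝ) / N) :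
    ∑ i, |hH.eigenvalues i| ≤ 2 * Real.sqrt (1 - p) := by
  classical
  have hNpos : (0:ℝ) < N := by exact_mod_cast hN
  set F : Finset (Fin N) := Finset.univ.filter (fun z => ¬ g z = z) with hF
  set P : Matrix (Fin k × Fin N) (Fin k × Fin N) ℂ :=
    ((1/N:ℝ):ℂ) • ∑ z ∈ F, ρ z ⊗ₖ Matrix.single (g z) (g z) (1:ℂ) with hPdef
  set Q : Matrix (Fin k × Fin N) (Fin k × Fin N) ℂ :=
    ((1/N:ℝ):ℂ) • ∑ z ∈ F, ρ z ⊗ₖ Matrix.single z z (1:ℂ) with hQdef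
  have hc : (0:ℝ) ≤ 1/N := by positivity
  have hXY : X - Y = P - Q := by
    rw [hX, hY, hPdef, hQdef, ← smul_sub, ← smul_sub, ← Finset.sum_sub_distrib,
      ← Finset.sum_sub_distrib]
    congr 1
    refine (Finset.sum_filter_of_ne ?_).symm
    intro z _ hz hgz
    exact hz (by rw [hgz, sub_self])
  have hP : P.PosSemidef :=
    psd_smul (psd_sum _ _ fun z _ => psd_kron (hρ z) (std_psd _)) hc
  have hQ : Q.PosSemidef :=
    psd_smul (psd_sum _ _ fun z _ => psd_kron (hρ z) (std_psd _)) hc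
  have htr : ∀ (h : Fin N → Fin N),
      (((1/N:ℝ):ℂ) • ∑ z ∈ F, ρ z ⊗ₖ Matrix.single (h z) (h z) (1:ℂ)).trace
        = (((F.card : ℝ)/N : ℝ) : ℂ) := by
    intro h
    rw [trace_smul, trace_sum]
    rw [Finset.sum_congr rfl (fun z _ => by
      rw [trace_kronecker, hρtr, std_trace, one_mul] :
      ∀ z ∈ F, (ρ z ⊗ₖ Matrix.single (h z) (h z) (1:ℂ)).trace = 1)]
    rw [Finset.sum_const, nsmul_eq_mul, mul_one, smul_eq_mul]
    push_cast
    ring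
  have hcard : (F.card : ℝ) = N - (Finset.univ.filter fun z : Fin N => g z = z).card := by
    have := Finset.card_filter_add_card_filter_not
      (s := (Finset.univ : Finset (Fin N))) (p := fun z => g z = z)
    rw [Finset.card_univ, Fintype.card_fin] at this
    have h2 : F.card + (Finset.univ.filter fun z : Fin N => g z = z).card = N := by
      rw [hF, Nat.add_comm]; exact this
    have := congrArg (fun x : ℕ => (x:ℝ)) h2
    push_cast at this
    linarith
  have key := traceNorm_le_of_eq_sub hH hP hQ hXY
  have e1 : P.trace.re = (F.card:ℝ)/N := by
    rw [hPdef, htr g, Complex.ofReal_re]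
  have e2 : Q.trace.re = (F.card:ℝ)/N := by
    rw [hQdef, htr (fun z => z), Complex.ofReal_re]
  have h1p : 1 - p = (F.card:ℝ)/N := by
    rw [hp, hcard]
    field_simp
  have hge : (0:ℝ) ≤ 1 - p := by rw [h1p]; positivity
  have hp0 : (0:ℝ) ≤ p := by rw [hp]; positivity
  have hle : 1 - p ≤ 1 := by linarith
  calc ∑ i, |hH.eigenvalues i| ≤ P.trace.re + Q.trace.re := key
    _ = 2 * (1 - p) := by rw [e1, e2, h1p]; ring
    _ ≤ 2 * Real.sqrt (1 - p) := by
        nlinarith [Real.sq_sqrt hge, Real.sqrt_nonneg (1 - p),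
          Real.sqrt_le_one.mpr hle]
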